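/- Let λ > 0, let c > 0, let a be a nonzero real number, let Δ ∈ ℝ, let T' ∈ ℝ, let t ≥ 0, and let D : ℝ → ℝ be a bounded measurable function. On a probability space let γ be a real random variable whose law is the exponential distribution with rate λ (i.e., with density s ↦ λ e^{−λs} on [0,∞)), let ρ be a random variable taking values in the non-negative integers whose law is the Poisson distribution with parameter c|a|/λ, and suppose γ and ρ are independent. Then E[ aΔ (T' − (1/λ) 1_{γ < t}) + (Sign(a)/c) · 1_{γ < t} · ρ · D(t − γ) ] = aΔ T' + a ∫_0^t (D(s) − Δ) e^{−λ(t−s)} ds, where Sign(x) equals 1 if x > 0, −1 if x < 0, and 0 if x = 0. -/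

import Mathlib

open MeasureTheory ProbabilityTheory

open Real Set
open scoped ENNReal NNReal

lemma aux_sign_mul_abs (a : ℝ) : Real.sign a * |a| = a := by
  rcases lt_trichotomy a 0 with h|h|h
  · rw [Real.sign_of_neg h, abs_of_neg h]; ring
  · simp [h]
  · rw [Real.sign_of_pos h, abs_of_pos h]; ring

lemma aux_poisson_hasSum (R : ℝ≥0) :
    HasSum (fun n : ℕ => (n : ℝ) * poissonPMFReal R n) (R : ℝ) := by
  have h := NormedSpace.expSeries_div_hasSum_exp (R : ℝ)
  rw [← Real.exp_eq_exp_ℝ] at h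
  have h2 := h.mul_left (Real.exp (-(R : ℝ)) * R)
  have key : (fun n : ℕ => Real.exp (-(R : ℝ)) * (R : ℝ) * ((R : ℝ) ^ n / n.factorial))
      = fun n : ℕ => ((n + 1 : ℕ) : ℝ) * poissonPMFReal R (n + 1) := by
    ext n
    unfold poissonPMFReal
    rw [Nat.factorial_succ, pow_succ]
    have h0 : ((n.factorial : ℝ)) ≠ 0 := Nat.cast_ne_zero.2 n.factorial_ne_zero
    have h1 : ((n : ℝ) + 1) ≠ 0 := by positivity
    push_cast
    field_simp
  rw [key] at h2
  have h3 : Real.exp (-(R : ℝ)) * (R : ℝ) * Real.exp (R : ℝ) = (R : ℝ) := by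
    rw [mul_comm (Real.exp (-(R : ℝ))) (R : ℝ), mul_assoc, ← Real.exp_add]
    simp
  rw [h3] at h2
  refine (hasSum_nat_add_iff' (f := fun n : ℕ => (n : ℝ) * poissonPMFReal R n) (g := (R:ℝ)) 1).mp ?_
  simpa using h2

lemma aux_poisson_singleton (R : ℝ≥0) (n : ℕ) :
    poissonMeasure R {n} = ENNReal.ofReal (poissonPMFReal R n) :=
  by rw [poissonMeasure_singleton]; rfl

lemma aux_poisson_integrable (R : ℝ≥0) :
    Integrable (fun n : ℕ => (n : ℝ)) (poissonMeasure R) := by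
  refine ⟨(measurable_from_top.comp measurable_id).aestronglyMeasurable, ?_⟩
  rw [HasFiniteIntegral, lintegral_countable']
  have hterm : ∀ n : ℕ, (‖(n : ℝ)‖₊ : ℝ≥0∞) * poissonMeasure R {n}
      = ENNReal.ofReal ((n : ℝ) * poissonPMFReal R n) := by
    intro n
    rw [aux_poisson_singleton, nnnorm_natCast,
      ENNReal.ofReal_mul (Nat.cast_nonneg n), ENNReal.ofReal_natCast]
    simp
  simp only [enorm_eq_nnnorm]
  rw [tsum_congr hterm, ← ENNReal.ofReal_tsum_of_nonneg
    (fun n => mul_nonneg (Nat.cast_nonneg n) poissonPMFReal_nonneg)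
    (aux_poisson_hasSum R).summable]
  exact ENNReal.ofReal_lt_top

lemma aux_poisson_mean (R : ℝ≥0) :
    ∫ n, (n : ℝ) ∂(poissonMeasure R) = (R : ℝ) := by
  rw [integral_poissonMeasure' (aux_poisson_integrable R)]
  have : ∀ n : ℕ, (Real.exp (-(R : ℝ)) * (R : ℝ) ^ n / (n.factorial : ℝ)) • (n : ℝ)
      = (n : ℝ) * poissonPMFReal R n := by
    intro n
    rw [poissonPMFReal, smul_eq_mul, mul_comm]
  rw [tsum_congr this]
  exact (aux_poisson_hasSum R).tsum_eq

lemma aux_exp_pdf_eq (lam x : ℝ) :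
    exponentialPDFReal lam x = if 0 ≤ x then lam * Real.exp (-(lam * x)) else 0 := by
  rw [exponentialPDFReal, gammaPDFReal]
  simp only [rpow_one, Real.Gamma_one, div_one, sub_self, rpow_zero, mul_one]

lemma aux_exp_integral {lam t : ℝ} (hlam : 0 < lam) (ht : 0 ≤ t) (h : ℝ → ℝ) :
    ∫ s, (if s < t then h s else 0) ∂(expMeasure lam)
      = ∫ s in (0:ℝ)..t, h s * (lam * Real.exp (-(lam * s))) := by
  have hmeas : Measurable fun x => Real.toNNReal (exponentialPDFReal lam x) :=
    (measurable_exponentialPDFReal lam).real_toNNReal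
  have hd : expMeasure lam = volume.withDensity
      (fun x => ((Real.toNNReal (exponentialPDFReal lam x) : ℝ≥0) : ℝ≥0∞)) := rfl
  rw [hd, integral_withDensity_eq_integral_smul hmeas]
  have heq : (fun x => Real.toNNReal (exponentialPDFReal lam x) • (if x < t then h x else 0))
      = Set.indicator (Set.Ico 0 t) (fun x => h x * (lam * Real.exp (-(lam * x)))) := by
    ext x
    rw [NNReal.smul_def, Real.coe_toNNReal _ (exponentialPDFReal_nonneg hlam x)]
    by_cases hx0 : 0 ≤ x
    · by_cases hxt : x < t
      · rw [Set.indicator_of_mem (Set.mem_Ico.mpr ⟨hx0, hxt⟩), if_pos hxt, aux_exp_pdf_eq, if_pos hx0, smul_eq_mul]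
        ring
      · rw [Set.indicator_of_notMem (fun hm => hxt hm.2), if_neg hxt, smul_zero]
    · rw [Set.indicator_of_notMem (fun hm => hx0 hm.1), aux_exp_pdf_eq, if_neg hx0, zero_smul]
  rw [heq, integral_indicator measurableSet_Ico, integral_Ico_eq_integral_Ioo,
    ← integral_Ioc_eq_integral_Ioo, ← intervalIntegral.integral_of_le ht]

lemma aux_integrable_of_bdd {Ω : Type*} [MeasurableSpace Ω] {P : Measure Ω} [IsFiniteMeasure P]
    {f : Ω → ℝ} (hf : Measurable f) {C : ℝ} (h : ∀ ω, |f ω| ≤ C) : Integrable f P :=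
  ⟨hf.aestronglyMeasurable, HasFiniteIntegral.of_bounded (C := C)
    (Filter.Eventually.of_forall (fun ω => by simpa [Real.norm_eq_abs] using h ω))⟩

/-- The key per-jump expectation identity underlying the unbiasedness of the Poisson Path
estimator (Proposition A.1): with `γ` exponential of rate `λ` and `ρ` Poisson of parameter
`c|a|/λ`, independent of each other,
`E[aΔ(T' − (1/λ)1_{γ<t}) + (Sign(a)/c) 1_{γ<t} ρ D(t − γ)]
  = aΔT' + a ∫_0^t (D(s) − Δ) e^{−λ(t−s)} ds`. -/
theorem per_jump_expectation_identity
    {Ω : Type*} [MeasurableSpace Ω]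
    (P : Measure Ω) [IsProbabilityMeasure P]
    (lam c a Δ T' : ℝ) (hlam : 0 < lam) (hc : 0 < c) (ha : a ≠ 0)
    (t : ℝ) (ht : 0 ≤ t)
    (D : ℝ → ℝ) (hDmeas : Measurable D) (hDbdd : ∃ C, ∀ u, |D u| ≤ C)
    (γ : Ω → ℝ) (hγmeas : Measurable γ)
    (hγ : Measure.map γ P = expMeasure lam)
    (ρ : Ω → ℕ) (hρmeas : Measurable ρ)
    (hρ : Measure.map ρ P = poissonMeasure (Real.toNNReal (c * |a| / lam)))
    (hindep : IndepFun γ ρ P) :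
    ∫ ω, (a * Δ * (T' - (1 / lam) * (if γ ω < t then (1 : ℝ) else 0))
        + (Real.sign a / c) * (if γ ω < t then (1 : ℝ) else 0) * (ρ ω : ℝ) * D (t - γ ω)) ∂P
      = a * Δ * T' + a * ∫ s in (0 : ℝ)..t, (D s - Δ) * Real.exp (-lam * (t - s)) := by
  obtain ⟨C, hC⟩ := hDbdd
  have hC0 : 0 ≤ C := (abs_nonneg _).trans (hC 0)
  set R : ℝ≥0 := Real.toNNReal (c * |a| / lam) with hRdef
  have hRcoe : (R : ℝ) = c * |a| / lam := Real.coe_toNNReal _ (by positivity)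
  set χ : ℝ → ℝ := fun s => if s < t then (1 : ℝ) else 0 with hχ
  set F : ℝ → ℝ := fun s => if s < t then D (t - s) else 0 with hF
  have hχmeas : Measurable χ :=
    Measurable.ite measurableSet_Iio measurable_const measurable_const
  have hFmeas : Measurable F := Measurable.ite measurableSet_Iio
    (hDmeas.comp (measurable_const.sub measurable_id)) measurable_const
  have hχbdd : ∀ s, |χ s| ≤ 1 := by
    intro s; by_cases hs : s < t <;> simp [hχ, hs]
  have hFbdd : ∀ s, |F s| ≤ C := by
    intro s
    by_cases hs : s < t
    · simpa [hF, hs] using hC (t - s)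
    · simpa [hF, hs] using hC0
  have hcast : Measurable (fun n : ℕ => (n : ℝ)) := measurable_from_top
  -- integrability
  have hint1 : Integrable (fun ω => χ (γ ω)) P :=
    aux_integrable_of_bdd (hχmeas.comp hγmeas) (fun ω => hχbdd _)
  have hXint : Integrable (fun ω => F (γ ω)) P :=
    aux_integrable_of_bdd (hFmeas.comp hγmeas) (fun ω => hFbdd _)
  have hYint : Integrable (fun ω => (ρ ω : ℝ)) P := by
    have h1 := aux_poisson_integrable R
    rw [← hρ] at h1
    exact (integrable_map_measure hcast.aestronglyMeasurable hρmeas.aemeasurable).mp h1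
  have hindep2 : IndepFun (fun ω => F (γ ω)) (fun ω => (ρ ω : ℝ)) P :=
    hindep.comp hFmeas hcast
  have hprod_int : Integrable (fun ω => F (γ ω) * (ρ ω : ℝ)) P :=
    hindep2.integrable_mul hXint hYint
  -- pointwise rewriting of the integrand
  have hpt : ∀ ω, a * Δ * (T' - (1 / lam) * (if γ ω < t then (1 : ℝ) else 0))
      + (Real.sign a / c) * (if γ ω < t then (1 : ℝ) else 0) * (ρ ω : ℝ) * D (t - γ ω)
      = a * Δ * T' + ((-(a * Δ / lam)) * χ (γ ω)
        + (Real.sign a / c) * (F (γ ω) * (ρ ω : ℝ))) := by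
    intro ω
    by_cases hx : γ ω < t
    · simp only [hχ, hF, if_pos hx]
      field_simp
      ring
    · simp only [hχ, hF, if_neg hx]
      ring
  have hg1 : Integrable (fun ω => (-(a * Δ / lam)) * χ (γ ω)) P := hint1.const_mul _
  have hg2 : Integrable (fun ω => (Real.sign a / c) * (F (γ ω) * (ρ ω : ℝ))) P :=
    hprod_int.const_mul _
  have hadd : Integrable (fun ω => (-(a * Δ / lam)) * χ (γ ω)
      + (Real.sign a / c) * (F (γ ω) * (ρ ω : ℝ))) P := hg1.add hg2
  rw [integral_congr_ae (Filter.Eventually.of_forall hpt),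
    integral_add (integrable_const (a * Δ * T')) hadd, integral_add hg1 hg2,
    integral_const, integral_const_mul, integral_const_mul]
  simp only [measure_univ, ENNReal.toReal_one, probReal_univ, one_smul]
  -- independence
  have hmul : ∫ ω, F (γ ω) * (ρ ω : ℝ) ∂P
      = (∫ ω, F (γ ω) ∂P) * ∫ ω, (ρ ω : ℝ) ∂P :=
    hindep2.integral_mul_eq_mul_integral hXint.1 hYint.1
  -- expectations via laws
  have hIY : ∫ ω, (ρ ω : ℝ) ∂P = c * |a| / lam := by
    have h1 := integral_map (μ := P) hρmeas.aemeasurable hcast.aestronglyMeasurable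
    rw [hρ] at h1
    rw [← h1, aux_poisson_mean, hRcoe]
  have hIχ : ∫ ω, χ (γ ω) ∂P
      = ∫ s in (0 : ℝ)..t, (1 : ℝ) * (lam * Real.exp (-(lam * s))) := by
    have h1 := integral_map (μ := P) hγmeas.aemeasurable hχmeas.aestronglyMeasurable
    rw [hγ] at h1
    rw [← h1]
    exact aux_exp_integral hlam ht (fun _ => (1 : ℝ))
  have hIF : ∫ ω, F (γ ω) ∂P
      = ∫ s in (0 : ℝ)..t, D (t - s) * (lam * Real.exp (-(lam * s))) := by
    have h1 := integral_map (μ := P) hγmeas.aemeasurable hFmeas.aestronglyMeasurable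
    rw [hγ] at h1
    rw [← h1]
    exact aux_exp_integral hlam ht (fun s => D (t - s))
  rw [hmul, hIY, hIχ, hIF]
  -- reflection of the integrals
  have hrefl1 : (∫ s in (0 : ℝ)..t, (1 : ℝ) * (lam * Real.exp (-(lam * s))))
      = lam * ∫ s in (0 : ℝ)..t, Real.exp (-lam * (t - s)) := by
    have hfun : (fun s => (1 : ℝ) * (lam * Real.exp (-(lam * s))))
        = fun s => (fun u => lam * Real.exp (-lam * (t - u))) (t - s) := by
      ext s
      rw [one_mul]
      congr 2
      ring
    rw [hfun, intervalIntegral.integral_comp_sub_left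
      (fun u => lam * Real.exp (-lam * (t - u))) t, sub_self, sub_zero,
      intervalIntegral.integral_const_mul]
  have hrefl2 : (∫ s in (0 : ℝ)..t, D (t - s) * (lam * Real.exp (-(lam * s))))
      = lam * ∫ s in (0 : ℝ)..t, D s * Real.exp (-lam * (t - s)) := by
    have hfun : (fun s => D (t - s) * (lam * Real.exp (-(lam * s))))
        = fun s => (fun u => lam * (D u * Real.exp (-lam * (t - u)))) (t - s) := by
      ext s
      show D (t - s) * (lam * Real.exp (-(lam * s)))
        = lam * (D (t - s) * Real.exp (-lam * (t - (t - s))))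
      rw [show -lam * (t - (t - s)) = -(lam * s) by ring]
      ring
    rw [hfun, intervalIntegral.integral_comp_sub_left
      (fun u => lam * (D u * Real.exp (-lam * (t - u)))) t, sub_self, sub_zero,
      intervalIntegral.integral_const_mul]
  rw [hrefl1, hrefl2]
  -- split the right-hand side integral
  have hDi : IntervalIntegrable (fun s => D s * Real.exp (-lam * (t - s))) volume 0 t := by
    have hcE : Continuous (fun s : ℝ => Real.exp (-lam * (t - s))) :=
      Real.continuous_exp.comp (continuous_const.mul (continuous_const.sub continuous_id))
    have hcont : Continuous (fun s : ℝ => C * Real.exp (-lam * (t - s))) :=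
      continuous_const.mul hcE
    refine (hcont.intervalIntegrable 0 t).mono_fun
      ((hDmeas.mul hcE.measurable).aestronglyMeasurable.restrict) ?_
    filter_upwards with x
    rw [Real.norm_eq_abs, Real.norm_eq_abs, abs_mul, abs_mul,
      abs_of_pos (Real.exp_pos _), abs_of_nonneg hC0]
    exact mul_le_mul_of_nonneg_right (hC x) (Real.exp_pos _).le
  have hci : IntervalIntegrable (fun s => Δ * Real.exp (-lam * (t - s))) volume 0 t :=
    (continuous_const.mul (Real.continuous_exp.comp
      (continuous_const.mul (continuous_const.sub continuous_id)))).intervalIntegrable 0 t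
  have hsplit : (∫ s in (0 : ℝ)..t, (D s - Δ) * Real.exp (-lam * (t - s)))
      = (∫ s in (0 : ℝ)..t, D s * Real.exp (-lam * (t - s)))
        - Δ * ∫ s in (0 : ℝ)..t, Real.exp (-lam * (t - s)) := by
    rw [← intervalIntegral.integral_const_mul, ← intervalIntegral.integral_sub hDi hci]
    apply intervalIntegral.integral_congr
    intro s _
    ring
  rw [hsplit]
  -- final algebra
  set J1 := ∫ s in (0 : ℝ)..t, Real.exp (-lam * (t - s))
  set J2 := ∫ s in (0 : ℝ)..t, D s * Real.exp (-lam * (t - s))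
  have hkey : Real.sign a / c * (lam * J2 * (c * |a| / lam)) = a * J2 := by
    have h1 : Real.sign a / c * (lam * J2 * (c * |a| / lam))
        = (Real.sign a * |a|) * J2 * (lam / lam) * (c / c) := by ring
    rw [h1, div_self hlam.ne', div_self hc.ne', aux_sign_mul_abs, mul_one, mul_one]
  rw [hkey]
  field_simp
  ring
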